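/- Let α ∈ ℂ and let ψ, z, u : ℂ → ℂ be entire functions with ψ nowhere vanishing. For (x,t) ∈ ℂ² define A(x,t) = [[t²/4 − z(x)/2 − x/2, −(ψ(x)/2)(t + u(x))], [(1/ψ(x))((u(x) − t)z(x)/2 + α), −t²/4 + z(x)/2 + x/2]] and B(x,t) = [[−t/2, ψ(x)], [z(x)/ψ(x), t/2]]. If the zero-curvature equation ∂A/∂x − ∂B/∂t + A·B − B·A = 0 holds for all (x,t) ∈ ℂ², then for all x ∈ ℂ: z'(x) = −2u(x)z(x) − 2α, u'(x) = u(x)² − 2z(x) − 2x, and u(x) = −ψ'(x)/ψ(x); consequently u satisfies the Painlevé II equation with parameter α − 1: u''(x) = 2u(x)³ − 4x·u(x) + 4(α − 1/2). -/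

import Mathlib

/-- Jimbo–Miwa matrix `A` of the isomonodromic system for Painlevé II. -/
noncomputable def Amat (α : ℂ) (ψ z u : ℂ → ℂ) (x t : ℂ) : Matrix (Fin 2) (Fin 2) ℂ :=
  !![t ^ 2 / 4 - z x / 2 - x / 2, -(ψ x / 2) * (t + u x);
     (1 / ψ x) * ((u x - t) * z x / 2 + α), -t ^ 2 / 4 + z x / 2 + x / 2]

/-- Jimbo–Miwa matrix `B` of the isomonodromic system for Painlevé II. -/
noncomputable def Bmat (ψ z : ℂ → ℂ) (x t : ℂ) : Matrix (Fin 2) (Fin 2) ℂ :=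
  !![-t / 2, ψ x;
     z x / ψ x, t / 2]

/-- **Remark 2.8.** If entire `ψ, z, u` (with `ψ` nowhere vanishing) make the
zero-curvature equation `∂A/∂x − ∂B/∂t + [A, B] = 0` hold, then
`z' = −2uz − 2α`, `u' = u² − 2z − 2x`, `u = −ψ'/ψ`, and consequently `u`
satisfies Painlevé II with parameter `α − 1`. -/
theorem zero_curvature_implies_painleveII
    (α : ℂ) (ψ z u : ℂ → ℂ)
    (hψ : Differentiable ℂ ψ) (hz : Differentiable ℂ z) (hu : Differentiable ℂ u)
    (hψ0 : ∀ x : ℂ, ψ x ≠ 0)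
    (hzc : ∀ x t : ℂ,
      (Matrix.of fun i j : Fin 2 => deriv (fun y => Amat α ψ z u y t i j) x)
        - (Matrix.of fun i j : Fin 2 => deriv (fun s => Bmat ψ z x s i j) t)
        + Amat α ψ z u x t * Bmat ψ z x t - Bmat ψ z x t * Amat α ψ z u x t = 0) :
    (∀ x : ℂ, deriv z x = -2 * u x * z x - 2 * α)
      ∧ (∀ x : ℂ, deriv u x = u x ^ 2 - 2 * z x - 2 * x)
      ∧ (∀ x : ℂ, u x = -(deriv ψ x / ψ x))
      ∧ (∀ x : ℂ, deriv (deriv u) x = 2 * u x ^ 3 - 4 * x * u x + 4 * (α - 1 / 2)) := by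
  -- generic computations of the derivatives of the matrix entries
  have dA00 : ∀ x t : ℂ, deriv (fun y => Amat α ψ z u y t 0 0) x
      = -(deriv z x) / 2 - 1 / 2 := by
    intro x t
    have e : (fun y => Amat α ψ z u y t 0 0) = fun y => t ^ 2 / 4 - z y / 2 - y / 2 := by
      funext y; simp [Amat]
    rw [e]
    have h : HasDerivAt (fun y => t ^ 2 / 4 - z y / 2 - y / 2)
        (0 - deriv z x / 2 - 1 / 2) x :=
      ((hasDerivAt_const x (t ^ 2 / 4)).sub ((hz x).hasDerivAt.div_const 2)).sub
        ((hasDerivAt_id x).div_const 2)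
    rw [h.deriv]; ring
  have dA01 : ∀ x t : ℂ, deriv (fun y => Amat α ψ z u y t 0 1) x
      = -(deriv ψ x / 2) * (t + u x) + -(ψ x / 2) * deriv u x := by
    intro x t
    have e : (fun y => Amat α ψ z u y t 0 1) = fun y => -(ψ y / 2) * (t + u y) := by
      funext y; simp [Amat]
    rw [e]
    have h : HasDerivAt (fun y => -(ψ y / 2) * (t + u y))
        (-(deriv ψ x / 2) * (t + u x) + -(ψ x / 2) * (0 + deriv u x)) x :=
      (((hψ x).hasDerivAt.div_const 2).neg.mul
        ((hasDerivAt_const x t).add (hu x).hasDerivAt))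
    rw [h.deriv]; ring
  have dB00 : ∀ x t : ℂ, deriv (fun s => Bmat ψ z x s 0 0) t = -(1 / 2) := by
    intro x t
    have e : (fun s => Bmat ψ z x s 0 0) = fun s => -s / 2 := by
      funext s; simp [Bmat]
    rw [e]
    have h : HasDerivAt (fun s : ℂ => -s / 2) (-1 / 2 : ℂ) t :=
      (hasDerivAt_id t).neg.div_const 2
    rw [h.deriv]; ring
  have dB01 : ∀ x t : ℂ, deriv (fun s => Bmat ψ z x s 0 1) t = 0 := by
    intro x t
    have e : (fun s => Bmat ψ z x s 0 1) = fun _ => ψ x := by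
      funext s; simp [Bmat]
    rw [e, deriv_const]
  -- the three first-order equations
  have key : ∀ x : ℂ, deriv z x = -2 * u x * z x - 2 * α
      ∧ u x = -(deriv ψ x / ψ x)
      ∧ deriv u x = u x ^ 2 - 2 * z x - 2 * x := by
    intro x
    have h00 := congrFun (congrFun (hzc x 0) 0) 0
    have h01a := congrFun (congrFun (hzc x 0) 0) 1
    have h01b := congrFun (congrFun (hzc x 1) 0) 1
    simp only [Matrix.sub_apply, Matrix.add_apply, Matrix.of_apply, Matrix.zero_apply,
      Matrix.mul_apply, Fin.sum_univ_two] at h00 h01a h01b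
    rw [dA00 x 0, dB00 x 0] at h00
    rw [dA01 x 0, dB01 x 0] at h01a
    rw [dA01 x 1, dB01 x 1] at h01b
    simp only [Amat, Bmat, Matrix.of_apply, Matrix.cons_val', Matrix.cons_val_zero,
      Matrix.cons_val_one, Matrix.head_cons, Matrix.empty_val', Matrix.cons_val_fin_one,
      Matrix.head_fin_const] at h00 h01a h01b
    have hpx := hψ0 x
    -- u = -ψ'/ψ
    have G2 : deriv ψ x + ψ x * u x = 0 := by linear_combination -2 * h01b + 2 * h01a
    have g2 : u x = -(deriv ψ x / ψ x) := by
      field_simp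
      linear_combination G2
    -- u' = u² - 2z - 2x
    have g3 : deriv u x = u x ^ 2 - 2 * z x - 2 * x := by
      have h : ψ x * deriv u x = ψ x * (u x ^ 2 - 2 * z x - 2 * x) := by
        linear_combination -2 * h01a - u x * G2
      exact mul_left_cancel₀ hpx h
    -- z' = -2uz - 2α
    have g1 : deriv z x = -2 * u x * z x - 2 * α := by
      field_simp at h00
      have h : ψ x ^ 2 * (deriv z x - (-2 * u x * z x - 2 * α)) = 0 := by
        linear_combination (-(ψ x ^ 2) / 8 : ℂ) * h00
      have h' := (mul_eq_zero.mp h).resolve_left (pow_ne_zero 2 hpx)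
      linear_combination h'
    exact ⟨g1, g2, g3⟩
  refine ⟨fun x => (key x).1, fun x => (key x).2.2, fun x => (key x).2.1, ?_⟩
  intro x
  have hdu : deriv u = fun y => u y ^ 2 - 2 * z y - 2 * y := funext fun y => (key y).2.2
  rw [hdu]
  have h : HasDerivAt (fun y => u y ^ 2 - 2 * z y - 2 * y)
      (2 * u x * deriv u x - 2 * deriv z x - 2) x := by
    have h1 : HasDerivAt (fun y => u y ^ 2) (2 * u x * deriv u x) x := by
      have := ((hu x).hasDerivAt.mul (hu x).hasDerivAt)
      have e : (fun y => u y ^ 2) = fun y => u y * u y := by funext y; ring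
      rw [e]; exact this.congr_deriv (by ring)
    have h2 : HasDerivAt (fun y : ℂ => 2 * z y) (2 * deriv z x) x :=
      (hz x).hasDerivAt.const_mul 2
    have h3 : HasDerivAt (fun y : ℂ => 2 * y) (2 : ℂ) x := by
      simpa using (hasDerivAt_id x).const_mul (2 : ℂ)
    exact (h1.sub h2).sub h3
  rw [h.deriv, (key x).1, (key x).2.2]
  ring
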